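/- Sandwich bound for the CAR training objective. Let S be a set, A a nonempty finite set, d : S × A → [0, ∞) a bounded weight, B : S → Set S a perturbation map with B(s) nonempty for every s, and T, Q : S × A → ℝ bounded functions. Define L_car := sup_{(s,a)} d(s,a) · sup_{s_ν ∈ B(s)} |T(s_ν, a) − Q(s_ν, a)|, L_train := sup_{(s,a)} d(s,a) · sup_{s_ν ∈ B(s)} |T(s, a) − Q(s_ν, a)|, and L_diff := sup_{(s,a)} d(s,a) · sup_{s_ν ∈ B(s)} |T(s_ν, a) − T(s, a)|. Then |L_train − L_diff| ≤ L_car ≤ L_train + L_diff. -/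

import Mathlib

lemma car_key {ι σ : Type*} [Nonempty ι]
    (d : ι → ℝ) (hd0 : ∀ i, 0 ≤ d i) (M : ℝ) (hM0 : 0 ≤ M) (hdM : ∀ i, d i ≤ M)
    (B : ι → Set σ) (hB : ∀ i, (B i).Nonempty)
    (φ ψ χ : ι → σ → ℝ)
    (C : ℝ)
    (hφ0 : ∀ i x, 0 ≤ φ i x) (hψ0 : ∀ i x, 0 ≤ ψ i x) (hχ0 : ∀ i x, 0 ≤ χ i x)
    (hφC : ∀ i x, φ i x ≤ C) (hψC : ∀ i x, ψ i x ≤ C) (hχC : ∀ i x, χ i x ≤ C)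
    (htri : ∀ i, ∀ x ∈ B i, φ i x ≤ ψ i x + χ i x) :
    (⨆ i, d i * ⨆ x ∈ B i, φ i x) ≤
      (⨆ i, d i * ⨆ x ∈ B i, ψ i x) + (⨆ i, d i * ⨆ x ∈ B i, χ i x) := by
  have hC0 : 0 ≤ C := by
    have i := Classical.arbitrary ι
    obtain ⟨x, -⟩ := hB i
    exact le_trans (hφ0 i x) (hφC i x)
  -- basic facts about inner sups
  haveI : Nonempty σ := ⟨(hB (Classical.arbitrary ι)).choose⟩
  have himg : ∀ (f : ι → σ → ℝ), (∀ i x, 0 ≤ f i x) → (∀ i x, f i x ≤ C) →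
      ∀ i, (⨆ x ∈ B i, f i x) = sSup (f i '' B i) := by
    intro f hf0 hfC i
    rw [← csSup_image (f := f i) ⟨C, by rintro y ⟨x, rfl⟩; exact hfC i x⟩]
    rw [Real.sSup_empty]
    haveI : Nonempty (B i) := (hB i).to_subtype
    exact Real.iSup_nonneg fun x => hf0 i x
  have hbdd : ∀ (f : ι → σ → ℝ), (∀ i x, f i x ≤ C) → ∀ i, BddAbove (f i '' B i) := by
    intro f hf i
    exact ⟨C, by rintro y ⟨x, _, rfl⟩; exact hf i x⟩
  have hsup_le : ∀ (f : ι → σ → ℝ), (∀ i x, 0 ≤ f i x) → (∀ i x, f i x ≤ C) → ∀ i,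
      (⨆ x ∈ B i, f i x) ≤ C := by
    intro f hf0 hf i
    rw [himg f hf0 hf i]
    exact csSup_le ((hB i).image _) (by rintro y ⟨x, _, rfl⟩; exact hf i x)
  have hsup_nn : ∀ (f : ι → σ → ℝ), (∀ i x, 0 ≤ f i x) → (∀ i x, f i x ≤ C) → ∀ i,
      0 ≤ (⨆ x ∈ B i, f i x) := by
    intro f hf0 hfC i
    obtain ⟨x, hx⟩ := hB i
    rw [himg f hf0 hfC i]
    exact le_trans (hf0 i x) (le_csSup (hbdd f hfC i) ⟨x, hx, rfl⟩)
  -- boundedness of outer families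
  have houter : ∀ (f : ι → σ → ℝ), (∀ i x, 0 ≤ f i x) → (∀ i x, f i x ≤ C) →
      BddAbove (Set.range fun i => d i * ⨆ x ∈ B i, f i x) := by
    intro f hf0 hfC
    refine ⟨M * C, ?_⟩
    rintro y ⟨i, rfl⟩
    exact mul_le_mul (hdM i) (hsup_le f hf0 hfC i) (hsup_nn f hf0 hfC i) hM0
  refine ciSup_le fun i => ?_
  have h1 : (⨆ x ∈ B i, φ i x) ≤ (⨆ x ∈ B i, ψ i x) + (⨆ x ∈ B i, χ i x) := by
    rw [himg φ hφ0 hφC i]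
    refine csSup_le ((hB i).image _) ?_
    rintro y ⟨x, hx, rfl⟩
    have h2 : ψ i x ≤ ⨆ x ∈ B i, ψ i x := by
      rw [himg ψ hψ0 hψC i]; exact le_csSup (hbdd ψ hψC i) ⟨x, hx, rfl⟩
    have h3 : χ i x ≤ ⨆ x ∈ B i, χ i x := by
      rw [himg χ hχ0 hχC i]; exact le_csSup (hbdd χ hχC i) ⟨x, hx, rfl⟩
    linarith [htri i x hx]
  have h4 : d i * (⨆ x ∈ B i, φ i x) ≤
      d i * (⨆ x ∈ B i, ψ i x) + d i * (⨆ x ∈ B i, χ i x) := by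
    rw [← mul_add]
    exact mul_le_mul_of_nonneg_left h1 (hd0 i)
  have h5 : d i * (⨆ x ∈ B i, ψ i x) ≤ ⨆ j, d j * ⨆ x ∈ B j, ψ j x :=
    le_ciSup (houter ψ hψ0 hψC) i
  have h6 : d i * (⨆ x ∈ B i, χ i x) ≤ ⨆ j, d j * ⨆ x ∈ B j, χ j x :=
    le_ciSup (houter χ hχ0 hχC) i
  linarith

/-- Sandwich bound for the CAR training objective:
`|L_train − L_diff| ≤ L_car ≤ L_train + L_diff`. -/
theorem stmt15 {S A : Type*} [Fintype A] [Nonempty A]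
    (d : S → A → ℝ) (hd0 : ∀ s a, 0 ≤ d s a) (hdb : ∃ M, ∀ s a, d s a ≤ M)
    (B : S → Set S) (hB : ∀ s, (B s).Nonempty)
    (T Q : S → A → ℝ)
    (hT : ∃ M, ∀ s a, |T s a| ≤ M) (hQ : ∃ M, ∀ s a, |Q s a| ≤ M)
    (Lcar Ltrain Ldiff : ℝ)
    (hLcar : Lcar = ⨆ p : S × A, d p.1 p.2 * ⨆ sν ∈ B p.1, |T sν p.2 - Q sν p.2|)
    (hLtrain : Ltrain = ⨆ p : S × A, d p.1 p.2 * ⨆ sν ∈ B p.1, |T p.1 p.2 - Q sν p.2|)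
    (hLdiff : Ldiff = ⨆ p : S × A, d p.1 p.2 * ⨆ sν ∈ B p.1, |T sν p.2 - T p.1 p.2|) :
    |Ltrain - Ldiff| ≤ Lcar ∧ Lcar ≤ Ltrain + Ldiff := by
  by_cases hS : Nonempty S
  · obtain ⟨Md, hMd⟩ := hdb
    obtain ⟨MT, hMT⟩ := hT
    obtain ⟨MQ, hMQ⟩ := hQ
    obtain ⟨s0⟩ := hS
    haveI : Nonempty (S × A) := ⟨(s0, Classical.arbitrary A)⟩
    have hMd0 : 0 ≤ Md := le_trans (hd0 s0 (Classical.arbitrary A)) (hMd s0 _)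
    have hMT0 : 0 ≤ MT := le_trans (abs_nonneg _) (hMT s0 (Classical.arbitrary A))
    have hMQ0 : 0 ≤ MQ := le_trans (abs_nonneg _) (hMQ s0 (Classical.arbitrary A))
    set C : ℝ := MT + MT + MQ + MQ with hC
    have habs : ∀ (u v : S → A → ℝ), (∀ s a, |u s a| ≤ MT + MQ) →
        (∀ s a, |v s a| ≤ MT + MQ) → True := fun _ _ _ _ => trivial
    -- bounds for the three integrands
    have b1 : ∀ (p : S × A) (x : S), |T x p.2 - Q x p.2| ≤ C := by
      intro p x
      have := abs_sub (T x p.2) (Q x p.2)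
      have h1 := hMT x p.2; have h2 := hMQ x p.2
      calc |T x p.2 - Q x p.2| ≤ |T x p.2| + |Q x p.2| := abs_sub _ _
        _ ≤ C := by simp only [hC]; linarith
    have b2 : ∀ (p : S × A) (x : S), |T p.1 p.2 - Q x p.2| ≤ C := by
      intro p x
      have h1 := hMT p.1 p.2; have h2 := hMQ x p.2
      calc |T p.1 p.2 - Q x p.2| ≤ |T p.1 p.2| + |Q x p.2| := abs_sub _ _
        _ ≤ C := by simp only [hC]; linarith
    have b3 : ∀ (p : S × A) (x : S), |T x p.2 - T p.1 p.2| ≤ C := by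
      intro p x
      have h1 := hMT x p.2; have h2 := hMT p.1 p.2
      calc |T x p.2 - T p.1 p.2| ≤ |T x p.2| + |T p.1 p.2| := abs_sub _ _
        _ ≤ C := by simp only [hC]; linarith
    have key := fun (φ ψ χ : S × A → S → ℝ) hφ0 hψ0 hχ0 hφC hψC hχC htri =>
      car_key (ι := S × A) (σ := S) (fun p => d p.1 p.2) (fun p => hd0 p.1 p.2)
        Md hMd0 (fun p => hMd p.1 p.2) (fun p => B p.1) (fun p => hB p.1)
        φ ψ χ C hφ0 hψ0 hχ0 hφC hψC hχC htri
    have k1 : Lcar ≤ Ltrain + Ldiff := by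
      rw [hLcar, hLtrain, hLdiff]
      exact key (fun p x => |T x p.2 - Q x p.2|) (fun p x => |T p.1 p.2 - Q x p.2|)
        (fun p x => |T x p.2 - T p.1 p.2|)
        (fun p x => abs_nonneg _) (fun p x => abs_nonneg _) (fun p x => abs_nonneg _)
        b1 b2 b3
        (fun p x _ => by
          show |T x p.2 - Q x p.2| ≤ |T p.1 p.2 - Q x p.2| + |T x p.2 - T p.1 p.2|
          have : T x p.2 - Q x p.2 = (T p.1 p.2 - Q x p.2) + (T x p.2 - T p.1 p.2) := by ring
          rw [this]; exact abs_add_le _ _)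
    have k2 : Ltrain ≤ Lcar + Ldiff := by
      rw [hLcar, hLtrain, hLdiff]
      exact key (fun p x => |T p.1 p.2 - Q x p.2|) (fun p x => |T x p.2 - Q x p.2|)
        (fun p x => |T x p.2 - T p.1 p.2|)
        (fun p x => abs_nonneg _) (fun p x => abs_nonneg _) (fun p x => abs_nonneg _)
        b2 b1 b3
        (fun p x _ => by
          show |T p.1 p.2 - Q x p.2| ≤ |T x p.2 - Q x p.2| + |T x p.2 - T p.1 p.2|
          have : T p.1 p.2 - Q x p.2 = (T x p.2 - Q x p.2) - (T x p.2 - T p.1 p.2) := by ring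
          rw [this]; exact abs_sub _ _)
    have k3 : Ldiff ≤ Lcar + Ltrain := by
      rw [hLcar, hLtrain, hLdiff]
      exact key (fun p x => |T x p.2 - T p.1 p.2|) (fun p x => |T x p.2 - Q x p.2|)
        (fun p x => |T p.1 p.2 - Q x p.2|)
        (fun p x => abs_nonneg _) (fun p x => abs_nonneg _) (fun p x => abs_nonneg _)
        b3 b1 b2
        (fun p x _ => by
          show |T x p.2 - T p.1 p.2| ≤ |T x p.2 - Q x p.2| + |T p.1 p.2 - Q x p.2|
          have : T x p.2 - T p.1 p.2 = (T x p.2 - Q x p.2) - (T p.1 p.2 - Q x p.2) := by ring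
          rw [this]; exact abs_sub _ _)
    refine ⟨abs_sub_le_iff.mpr ⟨by linarith, by linarith⟩, k1⟩
  · have : IsEmpty (S × A) := ⟨fun p => hS ⟨p.1⟩⟩
    rw [hLcar, hLtrain, hLdiff]
    simp [Real.iSup_of_isEmpty]
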